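/- Let q be a prime power and n ≥ 1. If G ≅ PG(n−1,q) and 𝓕 is a partition of E(G) into flats of G with |𝓕| > 1, then |𝓕| > q^{n/2−1}. -/

import Mathlib

open Set Matroid

namespace GrowthRate

variable {α : Type*} {β : Type*}

/-- The deletion `M ＼ D` of a set from a matroid. -/
def del (M : Matroid α) (D : Set α) : Matroid α := M ↾ (M.E \ D)

/-- The contraction `M ／ C`, defined via duality. -/
def con (M : Matroid α) (C : Set α) : Matroid α := (del M✶ C)✶

/-- `N` is a minor of `M`. -/
def IsMinorOf (N M : Matroid α) : Prop := ∃ C D : Set α, N = del (con M C) D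

/-- The (extended) rank of a matroid: the supremum of the cardinalities of independent sets. -/
noncomputable def erk (M : Matroid α) : ℕ∞ :=
  ⨆ I : {I : Set α // M.Indep I}, (I : Set α).encard

/-- The rank `r(M)` of a matroid, as a natural number. -/
noncomputable def rk (M : Matroid α) : ℕ := (erk M).toNat

/-- The extended rank `r_M(X)` of a set in a matroid. -/
noncomputable def erS (M : Matroid α) (X : Set α) : ℕ∞ := erk (M ↾ X)

/-- The rank `r_M(X)` of a set in a matroid, as a natural number. -/
noncomputable def rS (M : Matroid α) (X : Set α) : ℕ := (erS M X).toNat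

/-- `e` is a nonloop of `M`. -/
def Nonloop (M : Matroid α) (e : α) : Prop := M.Indep {e}

/-- `M` is loopless. -/
def Loopless (M : Matroid α) : Prop := ∀ e ∈ M.E, M.Indep {e}

/-- `M` is simple: it has no loops and no pair of distinct parallel elements. -/
def Simple (M : Matroid α) : Prop := ∀ e ∈ M.E, ∀ f ∈ M.E, M.Indep {e, f}

/-- A point of a matroid is a rank-one flat. -/
def IsPoint (M : Matroid α) (P : Set α) : Prop := M.IsFlat P ∧ erS M P = 1

/-- `ε(M)`: the number of points (rank-one flats) of `M`. -/
noncomputable def eps (M : Matroid α) : ℕ := {P : Set α | IsPoint M P}.ncard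

/-- A circuit: a minimal dependent set. -/
def Circuit (M : Matroid α) (C : Set α) : Prop := M.Dep C ∧ ∀ e ∈ C, M.Indep (C \ {e})

/-- A cocircuit: a circuit of the dual. -/
def Cocircuit (M : Matroid α) (C : Set α) : Prop := Circuit M✶ C

/-- A matroid is weakly round if every cocircuit has rank at least `r(M) - 1`. -/
def WeaklyRound (M : Matroid α) : Prop := ∀ C, Cocircuit M C → rk M ≤ rS M C + 1

/-- An isomorphism between matroids, as a ground-set bijection preserving independence. -/
def IsoTo (M : Matroid α) (N : Matroid β) : Prop :=
  ∃ φ : α → β, Set.BijOn φ M.E N.E ∧ ∀ I ⊆ M.E, (M.Indep I ↔ N.Indep (φ '' I))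

/-- `M` is representable over the field `𝔽`. -/
def RepOver (𝔽 : Type) [Field 𝔽] (M : Matroid α) : Prop :=
  ∃ (n : ℕ) (φ : α → (Fin n → 𝔽)), ∀ I : Set α, I ⊆ M.E →
    (M.Indep I ↔ LinearIndependent 𝔽 (fun x : I => φ (x : α)))

/-- `M` is representable over the finite field `GF(q)` with `q` elements. -/
def RepGF (q : ℕ) (M : Matroid α) : Prop :=
  ∃ (𝔽 : Type) (fld : Field 𝔽) (_ : Fintype 𝔽),
    Fintype.card 𝔽 = q ∧ @RepOver α 𝔽 fld M

/-- `G` is (isomorphic to) the projective geometry `PG(n-1, q)`: a simple rank-`n`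
`GF(q)`-representable matroid with `(q^n - 1)/(q - 1)` elements. -/
def IsPG (q n : ℕ) (G : Matroid β) : Prop :=
  G.E.Finite ∧ Simple G ∧ rk G = n ∧ RepGF q G ∧
    G.E.ncard = ∑ i ∈ Finset.range n, q ^ i

/-- `A` is (isomorphic to) the affine geometry `AG(n-1, q)`: a projective geometry
`PG(n-1,q)` with a hyperplane deleted. -/
def IsAG (q n : ℕ) (A : Matroid β) : Prop :=
  ∃ (G : Matroid ℕ) (H : Set ℕ), IsPG q n G ∧ G.IsFlat H ∧ rS G H = n - 1 ∧
    IsoTo A (del G H)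

/-- `N` is a simplification of `M`. -/
def IsSimplificationOf (N M : Matroid α) : Prop :=
  ∃ X : Set α, X ⊆ M.E ∧ N = M ↾ X ∧ Simple N ∧
    ∀ e, Nonloop M e → ∃ x ∈ X, M.closure {x} = M.closure {e}

/-- `M` and `N` are equal up to simplification: they have isomorphic simplifications. -/
def SiIso (M : Matroid α) (N : Matroid β) : Prop :=
  ∃ (M' : Matroid α) (N' : Matroid β),
    IsSimplificationOf M' M ∧ IsSimplificationOf N' N ∧ IsoTo M' N'

/-- `N` is a `k`-element projection of `M`. -/
def ProjectionBy (k : ℕ) (N M : Matroid α) : Prop :=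
  ∃ (P : Matroid α) (K : Set α), P.Indep K ∧ K.Finite ∧ K.ncard = k ∧
    del P K = M ∧ con P K = N

/-- The class `𝒫_q(k)`: matroids of rank at least two that are, up to simplification,
a loopless `k`-element projection of a projective geometry over `GF(q)`. -/
def PClass (q k : ℕ) (M : Matroid α) : Prop :=
  2 ≤ rk M ∧ ∃ (G N : Matroid ℕ) (n : ℕ), IsPG q n G ∧ ProjectionBy k N G ∧
    Loopless N ∧ SiIso M N

/-- The class `𝒫_q(k, h)`: matroids in `𝒫_q(k)` all of whose restrictions of rank
at most `h` are `GF(q)`-representable. -/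
def PClassH (q k h : ℕ) (M : Matroid α) : Prop :=
  PClass q k M ∧ ∀ X ⊆ M.E, rS M X ≤ h → RepGF q (M ↾ X)

/-- The class `𝒫_q^d(k)`: matroids in `𝒫_q(k)` with `ε(M) = (q^(r+k)-1)/(q-1) - d`. -/
def PdClass (q k d : ℕ) (M : Matroid α) : Prop :=
  PClass q k M ∧ eps M + d = ∑ i ∈ Finset.range (rk M + k), q ^ i

/-- Membership `(k, d) ∈ D_q`, i.e. `0 ≤ d ≤ q (q^(2k) - 1)/(q^2 - 1)`. -/
def memD (q k d : ℕ) : Prop := d ≤ q * ∑ i ∈ Finset.range k, q ^ (2 * i)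

/-- The order `(k, d) ≺ (k', d')` on `D_q`: lexicographic on `(k, -d)`. -/
def Dlt (k d k' d' : ℕ) : Prop := k < k' ∨ (k = k' ∧ d' < d)

/-- `𝓜` is a (nonempty) minor-closed class of (finite) matroids, closed under isomorphism. -/
def IsMClass (𝓜 : Set (Matroid α)) : Prop :=
  𝓜.Nonempty ∧ (∀ M ∈ 𝓜, M.Finite) ∧
    (∀ ⦃M N : Matroid α⦄, M ∈ 𝓜 → IsMinorOf N M → N ∈ 𝓜) ∧
    (∀ ⦃M N : Matroid α⦄, M ∈ 𝓜 → IsoTo M N → N ∈ 𝓜)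

/-- The growth rate function `h_𝓜(n)` of a class of matroids. -/
noncomputable def hFn (𝓜 : Set (Matroid α)) (n : ℕ) : ℕ∞ :=
  ⨆ M ∈ {M ∈ 𝓜 | rk M ≤ n}, (eps M : ℕ∞)

/-- `𝓜` is a base-`q` exponentially dense minor-closed class, i.e. `𝓜 ∈ E_q`. -/
def ExpDense (q : ℕ) (𝓜 : Set (Matroid α)) : Prop :=
  IsMClass 𝓜 ∧ ∃ a : ℕ, ∀ n : ℕ,
    ((∑ i ∈ Finset.range n, q ^ i : ℕ) : ℕ∞) ≤ hFn 𝓜 n ∧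
      hFn 𝓜 n ≤ ((a * q ^ n : ℕ) : ℕ∞)

/-- `M` is (isomorphic to) the uniform matroid `U_{a,b}`. -/
def IsUnif (a b : ℕ) (M : Matroid β) : Prop :=
  M.E.Finite ∧ M.E.ncard = b ∧
    ∀ I : Set β, M.Indep I ↔ I ⊆ M.E ∧ I.Finite ∧ I.ncard ≤ a

/-- `c` satisfies the five properties of the parameter `c_𝓜` for the class `𝓜`
(equivalently, `c_𝓜 ≤ c`). -/
def IsCtrl (q c : ℕ) (𝓜 : Set (Matroid α)) : Prop :=
  (∀ M ∈ 𝓜, ¬ IsUnif 2 (c + 2) M) ∧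
  (∀ q' : ℕ, IsPrimePow q' → q < q' → ∀ M ∈ 𝓜, ¬ IsPG q' c M) ∧
  (∀ M ∈ 𝓜, eps M < q ^ (rk M + c)) ∧
  (∀ M ∈ 𝓜, ∀ C ⊆ M.E, eps M < q ^ (c + rS M C) * eps (con M C)) ∧
  (∀ k : ℕ, c ≤ k → ∀ M ∈ 𝓜, ¬ PClass q k M)

/-- Two sets are skew in `M`, i.e. their local connectivity `⊓_M(X,Y)` is zero. -/
def SkewPair (M : Matroid α) (X Y : Set α) : Prop :=
  erS M (X ∪ Y) = erS M X + erS M Y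

/-- `(X, Y)` is a modular pair in `M`. -/
def ModPair (M : Matroid α) (X Y : Set α) : Prop :=
  erS M (X ∩ Y) + erS M (X ∪ Y) = erS M X + erS M Y

/-- `S` is a `(q, k, t)`-stack. -/
def IsStack (q k t : ℕ) (S : Matroid α) : Prop :=
  ∃ F : Fin k → Set α, (∀ i, F i ⊆ S.E) ∧ Pairwise (Function.onFun Disjoint F) ∧
    S.Spanning (⋃ i, F i) ∧
    ∀ i : Fin k,
      rk ((con S (⋃ j : Fin k, ⋃ (_ : j < i), F j)) ↾ F i) ≤ t ∧
      ¬ RepGF q ((con S (⋃ j : Fin k, ⋃ (_ : j < i), F j)) ↾ F i)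

/-- `T` is the truncation of `M`. -/
def IsTruncationOf (T M : Matroid α) : Prop :=
  1 ≤ rk M ∧ T.E = M.E ∧
    ∀ I : Set α, T.Indep I ↔ (M.Indep I ∧ I.ncard ≤ rk M - 1)

/-- `P` is the modular sum (generalised parallel connection) of `M` and `N`:
it has ground set `E(M) ∪ E(N)`, has both `M` and `N` as restrictions, and its flats
are precisely the sets whose traces on `E(M)` and `E(N)` are flats. -/
def IsModularSum (P M N : Matroid α) : Prop :=
  P.E = M.E ∪ N.E ∧ (P ↾ M.E) = M ∧ (P ↾ N.E) = N ∧
    ∀ F : Set α, P.IsFlat F ↔ (F ⊆ P.E ∧ M.IsFlat (F ∩ M.E) ∧ N.IsFlat (F ∩ N.E))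

end GrowthRate

open GrowthRate

universe u


private lemma ncard_biUnion_eq {ι V : Type*} (s : Finset ι) (f : ι → Set V)
    (hfin : ∀ i ∈ s, (f i).Finite)
    (hdisj : (s : Set ι).Pairwise (Function.onFun Disjoint f)) :
    (⋃ i ∈ s, f i).ncard = ∑ i ∈ s, (f i).ncard := by
  classical
  induction s using Finset.induction with
  | empty => simp
  | insert a s ha ih =>
    rw [Finset.sum_insert ha, Finset.set_biUnion_insert]
    have hd : Disjoint (f a) (⋃ i ∈ s, f i) := by
      rw [Set.disjoint_iUnion₂_right]
      intro i hi
      exact hdisj (by simp) (by simp; exact Or.inr (by simpa using hi)) (fun h => ha (h ▸ hi))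
    rw [Set.ncard_union_eq hd (hfin a (by simp)) (Set.Finite.biUnion s.finite_toSet
      (fun i hi => hfin i (by simp; exact Or.inr (by simpa using hi))))]
    rw [ih (fun i hi => hfin i (by simp; exact Or.inr (by simpa using hi)))
      (hdisj.mono (by intro x hx; simp at hx ⊢; exact Or.inr hx))]

private lemma geom_mul (q : ℕ) (hq : 1 ≤ q) (n : ℕ) :
    (∑ i ∈ Finset.range n, q ^ i) * (q - 1) + 1 = q ^ n := by
  induction n with
  | zero => simp
  | succ n ih =>
    rw [Finset.sum_range_succ, add_mul, pow_succ]
    obtain ⟨r, rfl⟩ : ∃ r, q = r + 1 := ⟨q - 1, by omega⟩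
    have h2 : (r + 1) ^ n * ((r + 1) - 1) + (r + 1) ^ n = (r + 1) ^ n * (r + 1) := by
      simp [Nat.mul_succ]
    omega

/-- a projective geometry `PG(n-1, q)` cannot be partitioned into more
than one but at most `q^(n/2 - 1)` flats. -/
theorem flat_partition_lower_bound {α : Type u} (q n : ℕ) (hq : IsPrimePow q)
    (hn : 1 ≤ n) (G : Matroid α) (hG : IsPG q n G) (𝓕 : Set (Set α))
    (hflat : ∀ F ∈ 𝓕, G.IsFlat F) (hne : ∀ F ∈ 𝓕, F.Nonempty)
    (hcover : ⋃₀ 𝓕 = G.E) (hdisj : 𝓕.PairwiseDisjoint id)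
    (hcard : 1 < 𝓕.ncard) :
    (q : ℝ) ^ ((n : ℝ) / 2 - 1) < (𝓕.ncard : ℝ) := by
  classical
  obtain ⟨hEfin, hsimple, hrkG, hrep, hcount⟩ := hG
  obtain ⟨𝔽, fld, ftyp, hq𝔽, mm, φ, hφ⟩ := hrep
  have hq2 : 2 ≤ q := hq.two_le
  have hq1 : (1:ℕ) ≤ q := by omega
  -- basic matroid facts
  have hsingle : ∀ e ∈ G.E, G.Indep {e} := by
    intro e he
    have := hsimple e he e he
    simpa using this
  have hnz : ∀ e ∈ G.E, φ e ≠ 0 := by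
    intro e he h0
    have h := (hφ {e} (by simpa using he)).1 (hsingle e he)
    exact h.ne_zero ⟨e, Set.mem_singleton e⟩ h0
  have hInjOn : ∀ I : Set α, G.Indep I → Set.InjOn φ I := by
    intro I hI
    exact Set.injOn_iff_injective.mpr ((hφ I hI.subset_ground).1 hI).injective
  have hkey : ∀ I : Set α, G.Indep I → ∀ x ∈ G.E, x ∉ I →
      (G.Indep (insert x I) ↔ φ x ∉ Submodule.span 𝔽 (φ '' I)) := by
    intro I hI x hx hxI
    rw [hφ (insert x I) (Set.insert_subset hx hI.subset_ground)]
    change LinearIndepOn 𝔽 φ (insert x I) ↔ _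
    rw [linearIndepOn_insert hxI]
    exact ⟨fun h => h.2, fun h => ⟨(hφ I hI.subset_ground).1 hI, h⟩⟩
  have hmemflat : ∀ F : Set α, G.IsFlat F → ∀ e ∈ G.E,
      φ e ∈ Submodule.span 𝔽 (φ '' F) → e ∈ F := by
    intro F hF e he hspan
    obtain ⟨I, hI⟩ := G.exists_isBasis F hF.subset_ground
    have hspanle : Submodule.span 𝔽 (φ '' F) ≤ Submodule.span 𝔽 (φ '' I) := by
      rw [Submodule.span_le]
      rintro _ ⟨f, hf, rfl⟩
      by_cases hfI : f ∈ I
      · exact Submodule.subset_span (Set.mem_image_of_mem φ hfI)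
      · have hfE : f ∈ G.E := hF.subset_ground hf
        have hdep : ¬ G.Indep (insert f I) := (hI.insert_dep ⟨hf, hfI⟩).not_indep
        by_contra hmem
        exact hdep ((hkey I hI.indep f hfE hfI).mpr hmem)
    by_cases heI : e ∈ I
    · exact hI.subset heI
    · have hnind : ¬ G.Indep (insert e I) := by
        intro hind
        exact ((hkey I hI.indep e he heI).mp hind) (hspanle hspan)
      have hecl : e ∈ G.closure I := by
        rw [hI.indep.mem_closure_iff]
        exact Or.inl ⟨hnind, Set.insert_subset he hI.indep.subset_ground⟩
      rw [hI.closure_eq_closure, hF.closure] at hecl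
      exact hecl
  have hpar : ∀ e ∈ G.E, ∀ f ∈ G.E, e ≠ f → ∀ c : 𝔽, φ e ≠ c • φ f := by
    intro e he f hf hef c hc
    have h2 : G.Indep (insert e {f}) := hsimple e he f hf
    have h3 := (hkey {f} (hsingle f hf) e he (by simpa using hef)).mp h2
    apply h3
    rw [Set.image_singleton, hc]
    exact Submodule.smul_mem _ c (Submodule.subset_span rfl)
  -- the span of the ground set
  set T : Submodule 𝔽 (Fin mm → 𝔽) := Submodule.span 𝔽 (φ '' G.E) with hT
  -- dimension of T is n
  have hdim : Module.finrank 𝔽 T = n := by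
    have hEne : G.E.Nonempty := by
      rw [← Set.ncard_pos hEfin, hcount]
      refine Finset.sum_pos (fun i _ => pow_pos (by omega) i) ?_
      rw [Finset.nonempty_range_iff]
      omega
    obtain ⟨e0, he0⟩ := hEne
    have hub : ∀ I : Set α, G.Indep I → I.encard ≤ (Module.finrank 𝔽 T : ℕ∞) := by
      intro I hI
      have hIfin : I.Finite := hEfin.subset hI.subset_ground
      have hinj := hInjOn I hI
      have hli : LinearIndependent 𝔽 ((↑) : (φ '' I) → (Fin mm → 𝔽)) :=
        (linearIndepOn_iff_image hinj).mp ((hφ I hI.subset_ground).1 hI)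
      have hfin2 : (φ '' I).Finite := hIfin.image φ
      haveI := hfin2.fintype
      have h1 : Module.finrank 𝔽 (Submodule.span 𝔽 (φ '' I)) = (φ '' I).toFinset.card :=
        finrank_span_set_eq_card hli
      have h2 : Module.finrank 𝔽 (Submodule.span 𝔽 (φ '' I)) ≤ Module.finrank 𝔽 T :=
        Submodule.finrank_mono (Submodule.span_mono (Set.image_mono hI.subset_ground))
      calc I.encard = (φ '' I).encard := hinj.encard_image.symm
        _ = ((φ '' I).toFinset.card : ℕ∞) := by rw [Set.encard_eq_coe_toFinset_card]
        _ ≤ (Module.finrank 𝔽 T : ℕ∞) := by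
            rw [← h1]
            exact_mod_cast h2
    obtain ⟨b, hbsub, hbspan, hbli⟩ := exists_linearIndependent 𝔽 (φ '' G.E)
    have hbfin : b.Finite := (hEfin.image φ).subset hbsub
    haveI := hbfin.fintype
    have hbcard : Module.finrank 𝔽 (Submodule.span 𝔽 b) = b.toFinset.card :=
      finrank_span_set_eq_card hbli
    have hbT : Module.finrank 𝔽 T = b.toFinset.card := by
      rw [hT, ← hbspan, hbcard]
    have hch : ∀ v : Fin mm → 𝔽, ∃ e : α, e ∈ G.E ∧ (v ∈ b → φ e = v) := by
      intro v
      by_cases hv : v ∈ b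
      · obtain ⟨e, he, hev⟩ := hbsub hv
        exact ⟨e, he, fun _ => hev⟩
      · exact ⟨e0, he0, fun h => absurd h hv⟩
    choose g hgE hgφ using hch
    have hφI : φ '' (g '' b) = b := by
      rw [Set.image_image]
      apply Set.Subset.antisymm
      · rintro _ ⟨v, hv, rfl⟩
        show φ (g v) ∈ b
        rw [hgφ v hv]
        exact hv
      · intro v hv
        exact ⟨v, hv, hgφ v hv⟩
    have hIE : g '' b ⊆ G.E := by
      rintro _ ⟨v, hv, rfl⟩
      exact hgE v
    have hinjI : Set.InjOn φ (g '' b) := by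
      rintro _ ⟨v, hv, rfl⟩ _ ⟨w, hw, rfl⟩ h
      rw [hgφ v hv, hgφ w hw] at h
      rw [h]
    have hIindep : G.Indep (g '' b) := by
      rw [hφ _ hIE]
      exact (linearIndepOn_iff_image hinjI).mpr (by rw [hφI]; exact hbli)
    have hIcard : (g '' b).encard = (b.toFinset.card : ℕ∞) := by
      calc (g '' b).encard = (φ '' (g '' b)).encard := hinjI.encard_image.symm
        _ = b.encard := by rw [hφI]
        _ = (b.toFinset.card : ℕ∞) := by rw [Set.encard_eq_coe_toFinset_card]
    have herk : erk G = (Module.finrank 𝔽 T : ℕ∞) := by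
      unfold erk
      apply le_antisymm
      · exact iSup_le (fun J => hub J J.2)
      · rw [hbT, ← hIcard]
        exact le_iSup (fun J : {J : Set α // G.Indep J} => (J : Set α).encard) ⟨g '' b, hIindep⟩
    have hrkT : rk G = Module.finrank 𝔽 T := by
      unfold rk
      rw [herk]
      simp
    omega
  -- cardinality of submodules
  have hcardSub : ∀ U : Submodule 𝔽 (Fin mm → 𝔽),
      ((U : Set (Fin mm → 𝔽))).ncard = q ^ (Module.finrank 𝔽 U) := by
    intro U
    haveI : Fintype U := Fintype.ofFinite U
    have h1 : Nat.card U = q ^ Module.finrank 𝔽 U := by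
      rw [Nat.card_eq_fintype_card, Module.card_eq_pow_finrank (K := 𝔽), hq𝔽]
    rw [← Nat.card_coe_set_eq]
    exact h1
  have hcardSub' : ∀ U : Submodule 𝔽 (Fin mm → 𝔽),
      ((U : Set (Fin mm → 𝔽)) \ {0}).ncard = q ^ (Module.finrank 𝔽 U) - 1 := by
    intro U
    rw [Set.ncard_diff_singleton_of_mem U.zero_mem, hcardSub U]
  -- surjectivity onto lines
  have hsurj : ∀ v : Fin mm → 𝔽, v ∈ T → v ≠ 0 →
      ∃ e ∈ G.E, ∃ c : 𝔽, c ≠ 0 ∧ v = c • φ e := by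
    set sE : Finset α := hEfin.toFinset with hsE
    have hmemsE : ∀ e, e ∈ sE ↔ e ∈ G.E := by intro e; simp [hsE]
    set L : α → Set (Fin mm → 𝔽) := fun e => (fun c : 𝔽 => c • φ e) '' {c | c ≠ 0} with hL
    have hLsub : ∀ e ∈ G.E, L e ⊆ (T : Set (Fin mm → 𝔽)) \ {0} := by
      intro e he v hv
      obtain ⟨c, hc, rfl⟩ := hv
      refine ⟨Submodule.smul_mem _ _ (Submodule.subset_span (Set.mem_image_of_mem φ he)), ?_⟩
      simp only [Set.mem_singleton_iff]
      exact smul_ne_zero hc (hnz e he)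
    have hLcard : ∀ e ∈ G.E, (L e).ncard = q - 1 := by
      intro e he
      have hinj : Set.InjOn (fun c : 𝔽 => c • φ e) {c | c ≠ 0} := by
        intro c _ c' _ h
        by_contra hne'
        have h0 : (c - c') • φ e = 0 := by
          simp only at h
          rw [sub_smul, h, sub_self]
        rcases smul_eq_zero.mp h0 with h1 | h2
        · exact hne' (sub_eq_zero.mp h1)
        · exact hnz e he h2
      rw [hL]
      simp only
      rw [Set.ncard_image_of_injOn hinj]
      have hset : {c : 𝔽 | c ≠ 0} = Set.univ \ {0} := by
        ext c
        simp
      rw [hset, Set.ncard_diff_singleton_of_mem (Set.mem_univ (0:𝔽)),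
        Set.ncard_univ, Nat.card_eq_fintype_card, hq𝔽]
    have hLdisj : (↑sE : Set α).Pairwise (Function.onFun Disjoint L) := by
      intro e he f hf hef
      have heE : e ∈ G.E := (hmemsE e).mp he
      have hfE : f ∈ G.E := (hmemsE f).mp hf
      simp only [Function.onFun]
      rw [Set.disjoint_left]
      rintro v ⟨c, hc, rfl⟩ ⟨c', hc', heq⟩
      simp only [Set.mem_setOf_eq] at hc hc'
      change c' • φ f = c • φ e at heq
      apply hpar e heE f hfE hef (c⁻¹ * c')
      rw [mul_smul, heq, ← mul_smul, inv_mul_cancel₀ hc, one_smul]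
    have hScard : (⋃ e ∈ sE, L e).ncard = q ^ n - 1 := by
      rw [ncard_biUnion_eq sE L (fun e _ => (Set.toFinite _)) hLdisj]
      have hcongr : ∀ e ∈ sE, (L e).ncard = q - 1 :=
        fun e he => hLcard e ((hmemsE e).mp he)
      rw [Finset.sum_congr rfl hcongr, Finset.sum_const, smul_eq_mul]
      have hcardE : sE.card = ∑ i ∈ Finset.range n, q ^ i := by
        rw [hsE, ← Set.ncard_eq_toFinset_card _ hEfin, hcount]
      rw [hcardE]
      have := geom_mul q (by omega) n
      omega
    have hTcard : ((T : Set (Fin mm → 𝔽)) \ {0}).ncard = q ^ n - 1 := by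
      rw [hcardSub' T, hdim]
    have hSeq : (⋃ e ∈ sE, L e) = (T : Set (Fin mm → 𝔽)) \ {0} := by
      apply Set.eq_of_subset_of_ncard_le
      · intro v hv
        simp only [Set.mem_iUnion] at hv
        obtain ⟨e, he, hv⟩ := hv
        exact hLsub e ((hmemsE e).mp he) hv
      · rw [hScard, hTcard]
      · exact Set.toFinite _
    intro v hvT hv0
    have hmem : v ∈ (T : Set (Fin mm → 𝔽)) \ {0} := ⟨hvT, by simpa using hv0⟩
    rw [← hSeq] at hmem
    simp only [Set.mem_iUnion] at hmem
    obtain ⟨e, he, c, hc, hceq⟩ := hmem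
    simp only [Set.mem_setOf_eq] at hc
    exact ⟨e, (hmemsE e).mp he, c, hc, hceq.symm⟩
  -- flats
  have hFfin : 𝓕.Finite := by
    apply hEfin.finite_subsets.subset
    intro F hF
    exact (hflat F hF).subset_ground
  set dd : Set α → ℕ := fun F => Module.finrank 𝔽 (Submodule.span 𝔽 (φ '' F)) with hdd
  have hWT : ∀ F ∈ 𝓕, Submodule.span 𝔽 (φ '' F) ≤ T :=
    fun F hF => Submodule.span_mono (Set.image_mono (hflat F hF).subset_ground)
  have hWdisj : ∀ F ∈ 𝓕, ∀ F' ∈ 𝓕, F ≠ F' →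
      Submodule.span 𝔽 (φ '' F) ⊓ Submodule.span 𝔽 (φ '' F') = ⊥ := by
    intro F hF F' hF' hFF'
    rw [Submodule.eq_bot_iff]
    intro v hv
    by_contra hv0
    obtain ⟨e, he, c, hc, rfl⟩ := hsurj v (hWT F hF (Submodule.mem_inf.mp hv).1) hv0
    have heF : e ∈ F := hmemflat F (hflat F hF) e he (by
      have := (Submodule.mem_inf.mp hv).1
      have h2 : φ e = c⁻¹ • (c • φ e) := by rw [smul_smul, inv_mul_cancel₀ hc, one_smul]
      rw [h2]; exact Submodule.smul_mem _ _ this)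
    have heF' : e ∈ F' := hmemflat F' (hflat F' hF') e he (by
      have := (Submodule.mem_inf.mp hv).2
      have h2 : φ e = c⁻¹ • (c • φ e) := by rw [smul_smul, inv_mul_cancel₀ hc, one_smul]
      rw [h2]; exact Submodule.smul_mem _ _ this)
    exact Set.disjoint_left.mp (hdisj hF hF' hFF') heF heF'
  have hdpos : ∀ F ∈ 𝓕, 1 ≤ dd F := by
    intro F hF
    obtain ⟨e, he⟩ := hne F hF
    have heE : e ∈ G.E := (hflat F hF).subset_ground he
    rw [Nat.one_le_iff_ne_zero]
    intro h0
    have : Submodule.span 𝔽 (φ '' F) = ⊥ := by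
      rwa [Submodule.finrank_eq_zero] at h0
    have : φ e ∈ (⊥ : Submodule 𝔽 (Fin mm → 𝔽)) :=
      this ▸ Submodule.subset_span (Set.mem_image_of_mem φ he)
    exact hnz e heE (by simpa using this)
  have hdle : ∀ F ∈ 𝓕, dd F ≤ n - 1 := by
    intro F hF
    by_contra hgt
    have hge : n ≤ dd F := by omega
    have hWeq : Submodule.span 𝔽 (φ '' F) = T :=
      Submodule.eq_of_le_of_finrank_le (hWT F hF) (by rw [hdim]; exact hge)
    obtain ⟨F', hF', hFF'⟩ := Set.exists_ne_of_one_lt_ncard hcard F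
    obtain ⟨e', he'⟩ := hne F' hF'
    have he'E : e' ∈ G.E := (hflat F' hF').subset_ground he'
    have : e' ∈ F := hmemflat F (hflat F hF) e' he'E (by
      rw [hWeq]; exact Submodule.subset_span (Set.mem_image_of_mem φ he'E))
    exact Set.disjoint_left.mp (hdisj hF' hF hFF') he' this
  have hpairle : ∀ F ∈ 𝓕, ∀ F' ∈ 𝓕, F ≠ F' → dd F + dd F' ≤ n := by
    intro F hF F' hF' hFF'
    have h1 := Submodule.finrank_sup_add_finrank_inf_eq
      (Submodule.span 𝔽 (φ '' F)) (Submodule.span 𝔽 (φ '' F'))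
    rw [hWdisj F hF F' hF' hFF'] at h1
    simp only [finrank_bot, add_zero] at h1
    have h2 : Submodule.span 𝔽 (φ '' F) ⊔ Submodule.span 𝔽 (φ '' F') ≤ T :=
      sup_le (hWT F hF) (hWT F' hF')
    have h3 := Submodule.finrank_mono h2
    rw [hdim] at h3
    have e1 : dd F = Module.finrank 𝔽 (Submodule.span 𝔽 (φ '' F)) := rfl
    have e2 : dd F' = Module.finrank 𝔽 (Submodule.span 𝔽 (φ '' F')) := rfl
    omega
  -- the partition counting identity
  set sF : Finset (Set α) := hFfin.toFinset with hsF
  have hmemsF : ∀ F, F ∈ sF ↔ F ∈ 𝓕 := by intro F; simp [hsF]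
  have hsum : q ^ n - 1 = ∑ F ∈ sF, (q ^ (dd F) - 1) := by
    have hU : (⋃ F ∈ sF, ((Submodule.span 𝔽 (φ '' F) : Set (Fin mm → 𝔽)) \ {0}))
        = (T : Set (Fin mm → 𝔽)) \ {0} := by
      apply Set.Subset.antisymm
      · intro v hv
        simp only [Set.mem_iUnion] at hv
        obtain ⟨F, hF, hv⟩ := hv
        exact ⟨hWT F ((hmemsF F).mp hF) hv.1, hv.2⟩
      · rintro v ⟨hvT, hv0⟩
        obtain ⟨e, he, c, hc, rfl⟩ := hsurj v hvT (by simpa using hv0)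
        have heU : e ∈ ⋃₀ 𝓕 := hcover ▸ he
        obtain ⟨F, hF, heF⟩ := heU
        simp only [Set.mem_iUnion]
        refine ⟨F, (hmemsF F).mpr hF,
          Submodule.smul_mem _ _ (Submodule.subset_span (Set.mem_image_of_mem φ heF)),
          by simpa using hv0⟩
    have hpd : (↑sF : Set (Set α)).Pairwise
        (Function.onFun Disjoint (fun F => (Submodule.span 𝔽 (φ '' F) : Set (Fin mm → 𝔽)) \ {0})) := by
      intro F hF F' hF' hFF'
      have hFm : F ∈ 𝓕 := (hmemsF F).mp hF
      have hF'm : F' ∈ 𝓕 := (hmemsF F').mp hF'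
      simp only [Function.onFun]
      rw [Set.disjoint_left]
      rintro v ⟨hv1, hv10⟩ ⟨hv2, _⟩
      have hvinf : v ∈ Submodule.span 𝔽 (φ '' F) ⊓ Submodule.span 𝔽 (φ '' F') :=
        Submodule.mem_inf.mpr ⟨hv1, hv2⟩
      rw [hWdisj F hFm F' hF'm hFF'] at hvinf
      exact hv10 (by simpa using hvinf)
    have hcount2 := ncard_biUnion_eq sF
      (fun F => (Submodule.span 𝔽 (φ '' F) : Set (Fin mm → 𝔽)) \ {0})
      (fun F _ => Set.toFinite _) hpd
    rw [hU] at hcount2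
    calc q ^ n - 1 = ((T : Set (Fin mm → 𝔽)) \ {0}).ncard := by rw [hcardSub' T, hdim]
      _ = ∑ F ∈ sF, ((Submodule.span 𝔽 (φ '' F) : Set (Fin mm → 𝔽)) \ {0}).ncard := hcount2
      _ = ∑ F ∈ sF, (q ^ (dd F) - 1) := Finset.sum_congr rfl (fun F _ => hcardSub' _)
  have hNcard : 𝓕.ncard = sF.card := Set.ncard_eq_toFinset_card 𝓕 hFfin
  set N := 𝓕.ncard with hN
  have hN2 : 2 ≤ N := hcard
  set m0 := n / 2 with hm0
  -- at most one big flat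
  have hbig : ∀ F ∈ 𝓕, ∀ F' ∈ 𝓕, F ≠ F' → m0 < dd F → m0 < dd F' → False := by
    intro F hF F' hF' hFF' h1 h2
    have := hpairle F hF F' hF' hFF'
    omega
  obtain ⟨F0, hF0mem, hF0prop⟩ : ∃ F0 ∈ sF, ∀ F ∈ sF, F ≠ F0 → dd F ≤ m0 := by
    by_cases hex : ∃ F ∈ sF, m0 < dd F
    · obtain ⟨F0, hF0, hF0big⟩ := hex
      refine ⟨F0, hF0, fun F hF hne' => ?_⟩
      by_contra hgt
      exact hbig F ((hmemsF F).mp hF) F0 ((hmemsF F0).mp hF0) hne' (by omega) hF0big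
    · have hsFne : sF.Nonempty := Finset.card_pos.mp (by omega)
      obtain ⟨F0, hF0⟩ := hsFne
      exact ⟨F0, hF0, fun F hF _ => le_of_not_gt (fun hlt => hex ⟨F, hF, hlt⟩)⟩
  have hMcard : 2 ≤ sF.card := by omega
  have hmain : q ^ n ≤ q ^ (n - 1) + (sF.card - 1) * (q ^ m0 - 1) := by
    have hterm0 : q ^ (dd F0) - 1 ≤ q ^ (n - 1) - 1 :=
      Nat.sub_le_sub_right (Nat.pow_le_pow_right hq1 (hdle F0 ((hmemsF F0).mp hF0mem))) 1
    have hsum2 : ∑ F ∈ sF.erase F0, (q ^ (dd F) - 1) ≤ (sF.card - 1) * (q ^ m0 - 1) := by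
      calc ∑ F ∈ sF.erase F0, (q ^ (dd F) - 1) ≤ ∑ _F ∈ sF.erase F0, (q ^ m0 - 1) := by
            apply Finset.sum_le_sum
            intro F hF
            exact Nat.sub_le_sub_right (Nat.pow_le_pow_right hq1
              (hF0prop F (Finset.mem_of_mem_erase hF) (Finset.ne_of_mem_erase hF))) 1
        _ = (sF.card - 1) * (q ^ m0 - 1) := by
            rw [Finset.sum_const, Finset.card_erase_of_mem hF0mem, smul_eq_mul]
    have hsplit : ∑ F ∈ sF, (q ^ (dd F) - 1)
        = (q ^ (dd F0) - 1) + ∑ F ∈ sF.erase F0, (q ^ (dd F) - 1) :=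
      (Finset.add_sum_erase sF _ hF0mem).symm
    have h1 : 1 ≤ q ^ n := Nat.one_le_pow _ _ (by omega)
    have h2 : 1 ≤ q ^ (n - 1) := Nat.one_le_pow _ _ (by omega)
    set P := (sF.card - 1) * (q ^ m0 - 1) with hP
    set A := ∑ F ∈ sF, (q ^ (dd F) - 1) with hAs
    set B := ∑ F ∈ sF.erase F0, (q ^ (dd F) - 1) with hBs
    omega
  -- extract the clean inequality
  have hA : q ^ (n - 1) < (sF.card - 1) * q ^ m0 := by
    have hqn : 2 * q ^ (n - 1) ≤ q ^ n := by
      calc 2 * q ^ (n - 1) ≤ q * q ^ (n - 1) := Nat.mul_le_mul_right _ hq2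
        _ = q ^ n := by rw [← pow_succ']; congr 1; omega
    obtain ⟨b', hb'⟩ : ∃ b', q ^ m0 = b' + 1 :=
      ⟨q ^ m0 - 1, by have := Nat.one_le_pow m0 q (by omega); omega⟩
    rw [hb'] at hmain ⊢
    have hprod : (sF.card - 1) * (b' + 1) = (sF.card - 1) * b' + (sF.card - 1) := by
      rw [Nat.mul_add, Nat.mul_one]
    rw [hprod]
    simp only [Nat.add_sub_cancel] at hmain
    set u := (sF.card - 1) * b' with hu
    omega
  have hm0n : m0 ≤ n - 1 := by omega
  have hB : q ^ (n - 1 - m0) < sF.card - 1 := by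
    have hmul : q ^ (n - 1 - m0) * q ^ m0 = q ^ (n - 1) := by
      rw [← pow_add]
      congr 1
      omega
    have hlt : q ^ (n - 1 - m0) * q ^ m0 < (sF.card - 1) * q ^ m0 := by
      rw [hmul]
      exact hA
    exact lt_of_mul_lt_mul_right hlt (Nat.zero_le _)
  -- conclude over the reals
  have hqR : (1:ℝ) ≤ (q:ℝ) := by exact_mod_cast hq1
  have hexp : (n : ℝ) / 2 - 1 ≤ ((n - 1 - m0 : ℕ) : ℝ) := by
    have h1 : ((n - 1 - m0 : ℕ) : ℝ) = (n : ℝ) - 1 - (m0 : ℝ) := by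
      push_cast [Nat.cast_sub hm0n, Nat.cast_sub hn]
      ring
    have h2 : (m0 : ℝ) ≤ (n : ℝ) / 2 := by
      have : (2 * m0 : ℕ) ≤ (n : ℕ) := by omega
      have := (Nat.cast_le (α := ℝ)).mpr this
      push_cast at this
      linarith
    rw [h1]
    linarith
  have hfin1 : (q : ℝ) ^ ((n : ℝ) / 2 - 1) ≤ (q : ℝ) ^ (((n - 1 - m0 : ℕ) : ℝ)) :=
    Real.rpow_le_rpow_of_exponent_le hqR hexp
  rw [Real.rpow_natCast] at hfin1
  refine lt_of_le_of_lt hfin1 ?_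
  have : q ^ (n - 1 - m0) < N := by omega
  exact_mod_cast this
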